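/- Let w : ℝ → [0,∞) satisfy ∫ w = 1 with supp w ⊆ [α,ω] for real numbers α ≤ ω, and let f ∈ L¹(ℝ) satisfy f ≥ 0 a.e. and ∫ f = 1. Define G(p) = 2∫_{−∞}^p (w(x) − f(x)) dx and assume G(p)·f(p) = 0 for almost every p ∈ ℝ. Then ∫_ω^∞ f(x) dx = 0, i.e. f vanishes almost everywhere on (ω, ∞); equivalently, G(p) = 0 for all p ≥ ω. -/

import Mathlib

open MeasureTheory

/-- Symmetry identity: for an integrable `g` w.r.t. an atomless σ-finite measure,
`(∫ g)² = 2 ∫ g(p) (∫_{x>p} g(x))`. -/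
lemma sq_integral_eq_two_mul (μ : Measure ℝ) [SigmaFinite μ] [NullSingletonClass μ]
    (g : ℝ → ℝ) (hg : Integrable g μ) :
    (∫ x, g x ∂μ) ^ 2 = 2 * ∫ p, g p * ∫ x in Set.Ioi p, g x ∂μ ∂μ := by
  have hH : Integrable (fun q : ℝ × ℝ => g q.1 * g q.2) (μ.prod μ) := hg.mul_prod hg
  have htot : ∫ q : ℝ × ℝ, g q.1 * g q.2 ∂(μ.prod μ) = (∫ x, g x ∂μ) ^ 2 := by
    rw [integral_prod_mul]; ring
  set S : Set (ℝ × ℝ) := {q | q.1 < q.2} with hSdef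
  have hS : MeasurableSet S := measurableSet_lt measurable_fst measurable_snd
  have hsplit := integral_add_compl hS hH
  -- compute the integral over S
  have hindS : Integrable (S.indicator fun q : ℝ × ℝ => g q.1 * g q.2) (μ.prod μ) :=
    hH.indicator hS
  have hIS : ∫ q in S, g q.1 * g q.2 ∂(μ.prod μ)
      = ∫ p, g p * ∫ x in Set.Ioi p, g x ∂μ ∂μ := by
    rw [← integral_indicator hS, integral_prod _ hindS]
    refine integral_congr_ae (Filter.Eventually.of_forall fun p => ?_)
    have : ∀ y : ℝ, S.indicator (fun q : ℝ × ℝ => g q.1 * g q.2) (p, y)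
        = (Set.Ioi p).indicator (fun y => g p * g y) y := by
      intro y
      by_cases h : p < y
      · have h1 : (p, y) ∈ S := h
        rw [Set.indicator_of_mem h1, Set.indicator_of_mem (Set.mem_Ioi.2 h)]
      · have h1 : (p, y) ∉ S := h
        rw [Set.indicator_of_notMem h1, Set.indicator_of_notMem (by simpa using h)]
    simp_rw [this]
    rw [integral_indicator measurableSet_Ioi, ← integral_const_mul]
  -- compute the integral over Sᶜ via the swap map
  have hISc : ∫ q in Sᶜ, g q.1 * g q.2 ∂(μ.prod μ)
      = ∫ p, g p * ∫ x in Set.Ioi p, g x ∂μ ∂μ := by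
    have hswap := (Measure.measurePreserving_swap (μ := μ) (ν := μ)).integral_comp
      MeasurableEquiv.prodComm.measurableEmbedding
      (Sᶜ.indicator fun q : ℝ × ℝ => g q.1 * g q.2)
    have hT : MeasurableSet {q : ℝ × ℝ | q.1 ≤ q.2} :=
      measurableSet_le measurable_fst measurable_snd
    have hfun : ∀ q : ℝ × ℝ,
        (Sᶜ.indicator fun q : ℝ × ℝ => g q.1 * g q.2) (Prod.swap q)
        = ({q : ℝ × ℝ | q.1 ≤ q.2}).indicator (fun q : ℝ × ℝ => g q.1 * g q.2) q := by
      intro q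
      by_cases h : q.1 ≤ q.2
      · have h1 : Prod.swap q ∈ Sᶜ := by simp [hSdef, Prod.swap, not_lt.2 h]
        have h2 : q ∈ {q : ℝ × ℝ | q.1 ≤ q.2} := h
        rw [Set.indicator_of_mem h1, Set.indicator_of_mem h2]
        exact mul_comm _ _
      · have h1 : Prod.swap q ∉ Sᶜ := by simp [hSdef, Prod.swap, not_le.1 h]
        have h2 : q ∉ {q : ℝ × ℝ | q.1 ≤ q.2} := h
        rw [Set.indicator_of_notMem h1, Set.indicator_of_notMem h2]
    rw [← integral_indicator hS.compl, ← hswap]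
    simp_rw [hfun]
    have hindT : Integrable
        (({q : ℝ × ℝ | q.1 ≤ q.2}).indicator fun q : ℝ × ℝ => g q.1 * g q.2) (μ.prod μ) :=
      hH.indicator hT
    rw [integral_prod _ hindT]
    refine integral_congr_ae (Filter.Eventually.of_forall fun p => ?_)
    have : ∀ y : ℝ, ({q : ℝ × ℝ | q.1 ≤ q.2}).indicator
          (fun q : ℝ × ℝ => g q.1 * g q.2) (p, y)
        = (Set.Ici p).indicator (fun y => g p * g y) y := by
      intro y
      by_cases h : p ≤ y
      · have h1 : ((p, y) : ℝ × ℝ) ∈ {q : ℝ × ℝ | q.1 ≤ q.2} := h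
        rw [Set.indicator_of_mem h1, Set.indicator_of_mem (Set.mem_Ici.2 h)]
      · have h1 : ((p, y) : ℝ × ℝ) ∉ {q : ℝ × ℝ | q.1 ≤ q.2} := h
        rw [Set.indicator_of_notMem h1, Set.indicator_of_notMem (by simpa using h)]
    simp_rw [this]
    rw [integral_indicator measurableSet_Ici, ← integral_const_mul]
    exact setIntegral_congr_set (f := fun y => g p * g y)
      (Ioi_ae_eq_Ici (μ := μ) (a := p)).symm
  rw [hIS, hISc, htot] at hsplit
  linarith

/-- second step of the uniqueness proof: If `supp w ⊆ [α,ω]`,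
`G(p) = 2∫_{−∞}^p (w − f)` and `G·f = 0` a.e., then `f` vanishes a.e. on `(ω,∞)`
(equivalently `∫_ω^∞ f = 0`), and `G(p) = 0` for all `p ≥ ω`. -/
theorem equilibrium_vanishes_right_of_support (α ω : ℝ) (hαω : α ≤ ω)
    (w : ℝ → ℝ) (hw0 : ∀ x, 0 ≤ w x) (hwint : Integrable w)
    (hwnorm : ∫ x, w x = 1) (hwsupp : Function.support w ⊆ Set.Icc α ω)
    (f : ℝ → ℝ) (hfint : Integrable f) (hf0 : ∀ᵐ x ∂(volume : Measure ℝ), 0 ≤ f x)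
    (hfnorm : ∫ x, f x = 1)
    (hGf : ∀ᵐ p ∂(volume : Measure ℝ),
      (2 * ∫ x in Set.Iic p, (w x - f x)) * f p = 0) :
    (∫ x in Set.Ici ω, f x = 0) ∧
    (∀ᵐ x ∂(volume.restrict (Set.Ioi ω)), f x = 0) ∧
    (∀ p ≥ ω, 2 * ∫ x in Set.Iic p, (w x - f x) = 0) := by
  -- First, for p ≥ ω the primitive of w is 1.
  have hWp : ∀ p, ω ≤ p → ∫ x in Set.Iic p, w x = 1 := by
    intro p hp
    have h0 : ∫ x in Set.Ioi p, w x = 0 := by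
      refine setIntegral_eq_zero_of_forall_eq_zero fun x hx => ?_
      by_contra hne
      exact absurd ((hwsupp hne).2.trans hp) (not_le.2 hx)
    have := intervalIntegral.integral_Iic_add_Ioi (b := p) hwint.integrableOn hwint.integrableOn
    rw [h0, add_zero, hwnorm] at this
    exact this
  -- For p ≥ ω, G(p)/2 = ∫_{x>p} f.
  have hGp : ∀ p, ω ≤ p → (∫ x in Set.Iic p, (w x - f x)) = ∫ x in Set.Ioi p, f x := by
    intro p hp
    have hsplit := intervalIntegral.integral_Iic_add_Ioi (b := p) hfint.integrableOn hfint.integrableOn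
    rw [hfnorm] at hsplit
    rw [integral_sub hwint.integrableOn hfint.integrableOn, hWp p hp]
    linarith
  set μ : Measure ℝ := volume.restrict (Set.Ioi ω) with hμdef
  -- Key: f(p) * ∫_{x>p} f = 0 a.e. on (ω,∞).
  have hkey : ∀ᵐ p ∂μ, f p * ∫ x in Set.Ioi p, f x = 0 := by
    filter_upwards [ae_restrict_of_ae hGf, ae_restrict_mem measurableSet_Ioi]
      with p hGfp hpmem
    rw [hGp p (le_of_lt hpmem)] at hGfp
    rcases mul_eq_zero.1 hGfp with h | h
    · rcases mul_eq_zero.1 h with h | h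
      · norm_num at h
      · rw [h, mul_zero]
    · rw [h, zero_mul]
  -- the inner μ-set-integral agrees with the volume one on (ω,∞)
  have hinner : ∀ᵐ p ∂μ, f p * (∫ x in Set.Ioi p, f x ∂μ) = 0 := by
    filter_upwards [hkey, ae_restrict_mem measurableSet_Ioi] with p hp hpmem
    have hres : μ.restrict (Set.Ioi p) = volume.restrict (Set.Ioi p) := by
      rw [hμdef, Measure.restrict_restrict measurableSet_Ioi,
        Set.inter_eq_left.2 (Set.Ioi_subset_Ioi (le_of_lt hpmem))]
    rw [show (∫ x in Set.Ioi p, f x ∂μ) = ∫ x in Set.Ioi p, f x from by rw [hres]]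
    exact hp
  have hsq := sq_integral_eq_two_mul μ f hfint.restrict
  rw [integral_eq_zero_of_ae hinner, mul_zero, pow_eq_zero_iff (two_ne_zero)] at hsq
  -- ∫_{x>ω} f = 0
  have hIoi : ∫ x in Set.Ioi ω, f x = 0 := hsq
  have hf0μ : 0 ≤ᵐ[μ] f := ae_restrict_of_ae hf0
  have hae : ∀ᵐ x ∂μ, f x = 0 :=
    (integral_eq_zero_iff_of_nonneg_ae hf0μ hfint.restrict).1 hIoi
  refine ⟨?_, hae, ?_⟩
  · rw [← setIntegral_congr_set (Ioi_ae_eq_Ici (a := ω))]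
    exact hIoi
  · intro p hp
    rw [hGp p hp]
    have : ∀ᵐ x ∂volume.restrict (Set.Ioi p), f x = 0 :=
      ae_restrict_of_ae_restrict_of_subset (Set.Ioi_subset_Ioi hp) hae
    rw [integral_eq_zero_of_ae this, mul_zero]
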